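/- arXiv:1402.0810 — 2 statements merged into one kernel-verified Lean document; each statement's English description precedes it below -/
import Mathlib

section
/- Let A = {P^A_i} and B = {P^B_j} be projective observables on ℂ^d. Then for every density matrix ρ, the classical fidelity satisfies Σ_j √(q^{A→B}_ρ(j) · p^B_ρ(j)) ≥ F(E^A(ρ), ρ), and consequently Q_F(A→B) ≤ D_F^max(A) = 1 − (inf over density matrices ρ of F(E^A(ρ), ρ))². -/
open scoped BigOperators ComplexOrder
open Matrix

noncomputable section

/-- A projective observable: a finite family of mutually orthogonal
self-adjoint idempotents summing to the identity. -/
def IsProjObs {d r : ℕ} (P : Fin r → Matrix (Fin d) (Fin d) ℂ) : Prop :=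
  (∀ i, (P i).IsHermitian) ∧ (∀ i, P i * P i = P i) ∧
    (∀ i k, i ≠ k → P i * P k = 0) ∧ (∑ i, P i = 1)

/-- A density matrix: positive semidefinite with unit trace. -/
def IsDensity {d : ℕ} (ρ : Matrix (Fin d) (Fin d) ℂ) : Prop :=
  ρ.PosSemidef ∧ ρ.trace = 1

/-- The measurement channel `E^A(ρ) = Σ_i P_i ρ P_i` of a projective observable. -/
def measChannel {d r : ℕ} (P : Fin r → Matrix (Fin d) (Fin d) ℂ)
    (ρ : Matrix (Fin d) (Fin d) ℂ) : Matrix (Fin d) (Fin d) ℂ :=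
  ∑ i, P i * ρ * P i

/-- `p^B_ρ(j) = tr(P^B_j ρ)`. -/
def probB {d rB : ℕ} (Q : Fin rB → Matrix (Fin d) (Fin d) ℂ)
    (ρ : Matrix (Fin d) (Fin d) ℂ) (j : Fin rB) : ℝ :=
  ((Q j * ρ).trace).re

/-- `q^{A→B}_ρ(j) = tr(P^B_j Σ_i P^A_i ρ P^A_i)`. -/
def probAB {d rA rB : ℕ} (P : Fin rA → Matrix (Fin d) (Fin d) ℂ)
    (Q : Fin rB → Matrix (Fin d) (Fin d) ℂ)
    (ρ : Matrix (Fin d) (Fin d) ℂ) (j : Fin rB) : ℝ :=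
  ((Q j * measChannel P ρ).trace).re

open Classical in
/-- The positive semidefinite square root of a PSD matrix (junk value `0` otherwise). -/
noncomputable def msqrt {d : ℕ} (A : Matrix (Fin d) (Fin d) ℂ) :
    Matrix (Fin d) (Fin d) ℂ :=
  if h : A.PosSemidef then
    (h.1.eigenvectorUnitary : Matrix (Fin d) (Fin d) ℂ) *
      diagonal ((↑) ∘ Real.sqrt ∘ h.1.eigenvalues) *
      (star (h.1.eigenvectorUnitary : Matrix (Fin d) (Fin d) ℂ))
  else 0

/-- `|X| = √(Xᴴ X)`, the positive semidefinite absolute value of a matrix. -/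
noncomputable def matAbs {d : ℕ} (X : Matrix (Fin d) (Fin d) ℂ) :
    Matrix (Fin d) (Fin d) ℂ :=
  msqrt (Xᴴ * X)

/-- The quantum fidelity `F(ρ,σ) = tr √(√ρ σ √ρ)`. -/
noncomputable def qFid {d : ℕ} (ρ σ : Matrix (Fin d) (Fin d) ℂ) : ℝ :=
  ((msqrt (msqrt ρ * σ * msqrt ρ)).trace).re

/-- Variational distance `D_1(p,q) = (1/2) Σ_j |p_j − q_j|`. -/
def distL1 {rB : ℕ} (p q : Fin rB → ℝ) : ℝ := (1 / 2) * ∑ j, |p j - q j|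

/-- Chebyshev distance `D_∞(p,q) = max_j |p_j − q_j|`. -/
noncomputable def distLinf {rB : ℕ} (p q : Fin rB → ℝ) : ℝ := ⨆ j, |p j - q j|

/-- Classical fidelity `F(p,q) = Σ_j √(p_j q_j)`. -/
noncomputable def classFid {rB : ℕ} (p q : Fin rB → ℝ) : ℝ :=
  ∑ j, Real.sqrt (p j * q j)

/-- `Q_1(A→B)`. -/
noncomputable def Q1 {d rA rB : ℕ} (P : Fin rA → Matrix (Fin d) (Fin d) ℂ)
    (Q : Fin rB → Matrix (Fin d) (Fin d) ℂ) : ℝ :=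
  sSup {x : ℝ | ∃ ρ, IsDensity ρ ∧ x = distL1 (probAB P Q ρ) (probB Q ρ)}

/-- `Q_∞(A→B)`. -/
noncomputable def Qinf {d rA rB : ℕ} (P : Fin rA → Matrix (Fin d) (Fin d) ℂ)
    (Q : Fin rB → Matrix (Fin d) (Fin d) ℂ) : ℝ :=
  sSup {x : ℝ | ∃ ρ, IsDensity ρ ∧ x = distLinf (probAB P Q ρ) (probB Q ρ)}

/-- `Q_F(A→B)`. -/
noncomputable def QF {d rA rB : ℕ} (P : Fin rA → Matrix (Fin d) (Fin d) ℂ)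
    (Q : Fin rB → Matrix (Fin d) (Fin d) ℂ) : ℝ :=
  sSup {x : ℝ | ∃ ρ, IsDensity ρ ∧
    x = 1 - (classFid (probAB P Q ρ) (probB Q ρ)) ^ 2}

/-- The rank-one projection `|v⟩⟨v|` onto a (unit) vector `v`. -/
def proj {d : ℕ} (v : Fin d → ℂ) : Matrix (Fin d) (Fin d) ℂ :=
  Matrix.vecMulVec v (star v)

namespace Stmt6Aux

variable {d : ℕ}

lemma msqrt_posSemidef {A : Matrix (Fin d) (Fin d) ℂ} (h : A.PosSemidef) :
    (msqrt A).PosSemidef := by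
  rw [msqrt, dif_pos h]
  have hD : (diagonal ((↑) ∘ Real.sqrt ∘ h.1.eigenvalues : Fin d → ℂ)).PosSemidef :=
    Matrix.posSemidef_diagonal_iff.mpr fun i => by
      simp only [Function.comp_apply]
      exact Complex.zero_le_real.mpr (Real.sqrt_nonneg _)
  have := hD.mul_mul_conjTranspose_same (h.1.eigenvectorUnitary : Matrix (Fin d) (Fin d) ℂ)
  rwa [← Matrix.star_eq_conjTranspose] at this

lemma msqrt_mul_self {A : Matrix (Fin d) (Fin d) ℂ} (h : A.PosSemidef) :
    msqrt A * msqrt A = A := by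
  rw [msqrt, dif_pos h]
  set U : Matrix (Fin d) (Fin d) ℂ := (h.1.eigenvectorUnitary : Matrix (Fin d) (Fin d) ℂ) with hU
  have hU2 : star U * U = 1 := (Matrix.mem_unitaryGroup_iff').mp h.1.eigenvectorUnitary.2
  have hs : ∀ D E : Matrix (Fin d) (Fin d) ℂ,
      (U * D * star U) * (U * E * star U) = U * (D * E) * star U := by
    intro D E
    simp only [Matrix.mul_assoc]
    rw [← Matrix.mul_assoc (star U) U, hU2, Matrix.one_mul]
  rw [hs, diagonal_mul_diagonal]
  conv_rhs => rw [h.1.spectral_theorem]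
  refine congrArg (· * star U) (congrArg (U * ·) (congrArg diagonal (funext fun i => ?_)))
  simp only [Function.comp_apply]
  rw [← Complex.ofReal_mul, Real.mul_self_sqrt (h.eigenvalues_nonneg i)]
  rfl

lemma trace_cmul_self (A : Matrix (Fin d) (Fin d) ℂ) :
    (Aᴴ * A).trace = ∑ i, ∑ k, (Complex.normSq (A k i) : ℂ) := by
  simp only [Matrix.trace, Matrix.diag, Matrix.mul_apply, Matrix.conjTranspose_apply,
    Complex.normSq_eq_conj_mul_self]
  rfl

lemma re_trace_cmul_self (A : Matrix (Fin d) (Fin d) ℂ) :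
    ((Aᴴ * A).trace).re = ∑ i, ∑ k, Complex.normSq (A k i) := by
  rw [trace_cmul_self, Complex.re_sum]
  refine Finset.sum_congr rfl fun i _ => ?_
  rw [Complex.re_sum]
  simp

lemma re_trace_cmul_self_nonneg (A : Matrix (Fin d) (Fin d) ℂ) :
    0 ≤ ((Aᴴ * A).trace).re := by
  rw [re_trace_cmul_self]
  exact Finset.sum_nonneg fun i _ => Finset.sum_nonneg fun k _ => Complex.normSq_nonneg _

/-- Cauchy–Schwarz for the trace inner product (real part form). -/
lemma re_trace_cs (A B : Matrix (Fin d) (Fin d) ℂ) :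
    ((Aᴴ * B).trace).re ≤ Real.sqrt (((Aᴴ * A).trace).re * ((Bᴴ * B).trace).re) := by
  set f : Fin d × Fin d → ℝ := fun p => ‖A p.2 p.1‖ with hf
  set g : Fin d × Fin d → ℝ := fun p => ‖B p.2 p.1‖ with hg
  have h1 : ((Aᴴ * B).trace).re ≤ ∑ p : Fin d × Fin d, f p * g p := by
    have ht : (Aᴴ * B).trace = ∑ i, ∑ k, (starRingEnd ℂ) (A k i) * B k i := by
      simp only [Matrix.trace, Matrix.diag, Matrix.mul_apply, Matrix.conjTranspose_apply]
      rfl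
    rw [ht, Fintype.sum_prod_type, Complex.re_sum]
    refine Finset.sum_le_sum fun i _ => ?_
    rw [Complex.re_sum]
    refine Finset.sum_le_sum fun k _ => ?_
    calc ((starRingEnd ℂ) (A k i) * B k i).re
        ≤ ‖(starRingEnd ℂ) (A k i) * B k i‖ := Complex.re_le_norm _
      _ = ‖A k i‖ * ‖B k i‖ := by rw [norm_mul, Complex.norm_conj]
  have h2 : (∑ p : Fin d × Fin d, f p * g p) ^ 2 ≤
      (∑ p : Fin d × Fin d, f p ^ 2) * ∑ p : Fin d × Fin d, g p ^ 2 :=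
    Finset.sum_mul_sq_le_sq_mul_sq _ _ _
  have hfA : ∑ p : Fin d × Fin d, f p ^ 2 = ((Aᴴ * A).trace).re := by
    rw [re_trace_cmul_self, Fintype.sum_prod_type]
    simp [hf, Complex.sq_norm]
  have hgB : ∑ p : Fin d × Fin d, g p ^ 2 = ((Bᴴ * B).trace).re := by
    rw [re_trace_cmul_self, Fintype.sum_prod_type]
    simp [hg, Complex.sq_norm]
  refine h1.trans ?_
  rw [← hfA, ← hgB]
  exact Real.le_sqrt_of_sq_le (by simpa using h2)

/-- Spectral pseudoinverse of a Hermitian matrix, with support projection. -/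
lemma exists_pinv {A : Matrix (Fin d) (Fin d) ℂ} (hA : A.IsHermitian) :
    ∃ T Pp : Matrix (Fin d) (Fin d) ℂ, Tᴴ = T ∧ A * T = Pp ∧ T * A = Pp ∧
      Pp * A = A ∧ Pp * Pp = Pp ∧ Ppᴴ = Pp ∧ T * Pp = T := by
  set U : Matrix (Fin d) (Fin d) ℂ := (hA.eigenvectorUnitary : Matrix (Fin d) (Fin d) ℂ) with hU
  have hU2 : star U * U = 1 := (Matrix.mem_unitaryGroup_iff').mp hA.eigenvectorUnitary.2
  have sandwich : ∀ D E : Matrix (Fin d) (Fin d) ℂ,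
      (U * D * star U) * (U * E * star U) = U * (D * E) * star U := by
    intro D E
    simp only [Matrix.mul_assoc]
    rw [← Matrix.mul_assoc (star U) U, hU2, Matrix.one_mul]
  set lam : Fin d → ℂ := fun i => (hA.eigenvalues i : ℂ) with hlam
  have hspec : A = U * Matrix.diagonal lam * star U := hA.spectral_theorem
  classical
  set gg : Fin d → ℂ := fun i => if lam i = 0 then 0 else (lam i)⁻¹ with hgg
  set ind : Fin d → ℂ := fun i => if lam i = 0 then 0 else 1 with hind
  have hconjT : ∀ v : Fin d → ℂ, star v = v →
      (U * Matrix.diagonal v * star U)ᴴ = U * Matrix.diagonal v * star U := by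
    intro v hv
    rw [Matrix.conjTranspose_mul, Matrix.conjTranspose_mul, Matrix.diagonal_conjTranspose, hv,
      Matrix.star_eq_conjTranspose, Matrix.conjTranspose_conjTranspose,
      ← Matrix.star_eq_conjTranspose, Matrix.mul_assoc]
  have hstar_gg : star gg = gg := by
    funext i
    simp only [Pi.star_apply, hgg]
    split_ifs with h
    · simp
    · rw [star_inv₀]
      congr 1
      simp [hlam, Complex.conj_ofReal]
  have hstar_ind : star ind = ind := by
    funext i
    simp only [Pi.star_apply, hind]
    split_ifs with h <;> simp
  have hlg : (fun i => lam i * gg i) = ind := by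
    funext i
    simp only [hgg, hind]
    split_ifs with h
    · simp
    · exact mul_inv_cancel₀ h
  have hgl : (fun i => gg i * lam i) = ind := by
    funext i
    rw [mul_comm]
    exact congrFun hlg i
  have hil : (fun i => ind i * lam i) = lam := by
    funext i
    simp only [hind]
    split_ifs with h <;> simp [h]
  have hii : (fun i => ind i * ind i) = ind := by
    funext i
    simp only [hind]
    split_ifs with h <;> simp
  have hgi : (fun i => gg i * ind i) = gg := by
    funext i
    simp only [hgg, hind]
    split_ifs with h <;> simp
  refine ⟨U * Matrix.diagonal gg * star U, U * Matrix.diagonal ind * star U,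
    hconjT gg hstar_gg, ?_, ?_, ?_, ?_, hconjT ind hstar_ind, ?_⟩
  · rw [hspec, sandwich, Matrix.diagonal_mul_diagonal, hlg]
  · rw [hspec, sandwich, Matrix.diagonal_mul_diagonal, hgl]
  · conv_lhs => rw [hspec]
    rw [sandwich, Matrix.diagonal_mul_diagonal, hil, hspec]
  · rw [sandwich, Matrix.diagonal_mul_diagonal, hii]
  · rw [sandwich, Matrix.diagonal_mul_diagonal, hgi]

/-- Polar-type contraction: `W` with `Wᴴ X = |X|` and `W Wᴴ` a Hermitian idempotent. -/
lemma exists_contraction (X : Matrix (Fin d) (Fin d) ℂ) :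
    ∃ W : Matrix (Fin d) (Fin d) ℂ, Wᴴ * X = matAbs X ∧
      (W * Wᴴ) * (W * Wᴴ) = W * Wᴴ ∧ (W * Wᴴ)ᴴ = W * Wᴴ := by
  have hpsd : (Xᴴ * X).PosSemidef := Matrix.posSemidef_conjTranspose_mul_self X
  have hm : matAbs X = msqrt (Xᴴ * X) := rfl
  set N := matAbs X with hNdef
  have hNps : N.PosSemidef := by rw [hm]; exact msqrt_posSemidef hpsd
  have hNN : N * N = Xᴴ * X := by rw [hm]; exact msqrt_mul_self hpsd
  have hNh : Nᴴ = N := hNps.1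
  obtain ⟨T, Pp, hTh, hNT, hTN, hPN, hPP, hPh, hTP⟩ := exists_pinv hNps.1
  have hNP : N * Pp = N := by
    have h := congrArg Matrix.conjTranspose hPN
    rwa [Matrix.conjTranspose_mul, hPh, hNh] at h
  have hXP : X * Pp = X := by
    have hz : X * (1 - Pp) = 0 := by
      rw [← Matrix.conjTranspose_mul_self_eq_zero]
      have h1 : (1 - Pp)ᴴ = 1 - Pp := by
        rw [Matrix.conjTranspose_sub, hPh, Matrix.conjTranspose_one]
      have hN0 : N * (1 - Pp) = 0 := by rw [Matrix.mul_sub, Matrix.mul_one, hNP, sub_self]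
      calc (X * (1 - Pp))ᴴ * (X * (1 - Pp))
          = (1 - Pp)ᴴ * (Xᴴ * (X * (1 - Pp))) := by
            rw [Matrix.conjTranspose_mul, Matrix.mul_assoc]
        _ = (1 - Pp) * (N * (N * (1 - Pp))) := by
            rw [h1, ← Matrix.mul_assoc Xᴴ X (1 - Pp), ← hNN, Matrix.mul_assoc]
        _ = 0 := by rw [hN0, Matrix.mul_zero, Matrix.mul_zero]
    rw [Matrix.mul_sub, Matrix.mul_one] at hz
    exact (sub_eq_zero.mp hz).symm
  refine ⟨X * T, ?_, ?_, ?_⟩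
  · rw [Matrix.conjTranspose_mul, hTh, Matrix.mul_assoc, ← hNN, ← Matrix.mul_assoc, hTN, hPN]
  · have hWW : (X * T)ᴴ * (X * T) = Pp := by
      rw [Matrix.conjTranspose_mul, hTh, Matrix.mul_assoc T Xᴴ (X * T),
        ← Matrix.mul_assoc Xᴴ X T, ← hNN, Matrix.mul_assoc N N T, hNT, hNP, hTN]
    have hWP : (X * T) * Pp = X * T := by rw [Matrix.mul_assoc, hTP]
    rw [Matrix.mul_assoc (X * T) (X * T)ᴴ, ← Matrix.mul_assoc (X * T)ᴴ (X * T) (X * T)ᴴ,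
      ← Matrix.mul_assoc (X * T), hWW, hWP]
  · rw [Matrix.conjTranspose_mul, Matrix.conjTranspose_conjTranspose]

lemma psd_re_trace_nonneg {A : Matrix (Fin d) (Fin d) ℂ} (hA : A.PosSemidef) :
    0 ≤ (A.trace).re := by
  have h : A = (msqrt A)ᴴ * msqrt A := by rw [(msqrt_posSemidef hA).1, msqrt_mul_self hA]
  rw [h]
  exact re_trace_cmul_self_nonneg _

lemma qFid_nonneg' (ρ σ : Matrix (Fin d) (Fin d) ℂ) : 0 ≤ qFid ρ σ := by
  rw [qFid]
  by_cases h : (msqrt ρ * σ * msqrt ρ).PosSemidef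
  · exact psd_re_trace_nonneg (msqrt_posSemidef h)
  · rw [msqrt, dif_neg h]
    simp

lemma re_trace_cmul_mul_proj_nonneg (C K : Matrix (Fin d) (Fin d) ℂ)
    (hK : K * K = K) (hKh : Kᴴ = K) : 0 ≤ ((Cᴴ * C * K).trace).re := by
  have h2 : ((C * K)ᴴ * (C * K)).trace = (Cᴴ * C * K).trace := by
    rw [Matrix.conjTranspose_mul, hKh, Matrix.mul_assoc K Cᴴ (C * K),
      Matrix.trace_mul_comm, ← Matrix.mul_assoc Cᴴ C K, Matrix.mul_assoc (Cᴴ * C) K K, hK]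
  rw [← h2]
  exact re_trace_cmul_self_nonneg _

lemma re_trace_CK_le (C K : Matrix (Fin d) (Fin d) ℂ)
    (hK : K * K = K) (hKh : Kᴴ = K) :
    ((Cᴴ * C * K).trace).re ≤ ((Cᴴ * C).trace).re := by
  have h1 : (1 - K) * (1 - K) = 1 - K := by
    simp only [Matrix.sub_mul, Matrix.mul_sub, Matrix.one_mul, Matrix.mul_one, hK]
    abel
  have h2 : (1 - K)ᴴ = 1 - K := by
    rw [Matrix.conjTranspose_sub, hKh, Matrix.conjTranspose_one]
  have h3 := re_trace_cmul_mul_proj_nonneg C (1 - K) h1 h2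
  have h4 : Cᴴ * C * (1 - K) = Cᴴ * C - Cᴴ * C * K := by
    rw [Matrix.mul_sub, Matrix.mul_one]
  rw [h4, Matrix.trace_sub, Complex.sub_re] at h3
  linarith

/-- The main inequality: monotonicity of fidelity under the B-measurement. -/
lemma key_ineq {d rA rB : ℕ} (P : Fin rA → Matrix (Fin d) (Fin d) ℂ)
    (Q : Fin rB → Matrix (Fin d) (Fin d) ℂ)
    (hP : IsProjObs P) (hQ : IsProjObs Q) (ρ : Matrix (Fin d) (Fin d) ℂ)
    (hρ : IsDensity ρ) :
    qFid (measChannel P ρ) ρ ≤ classFid (probAB P Q ρ) (probB Q ρ) := by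
  have hρp : ρ.PosSemidef := hρ.1
  set σ := measChannel P ρ with hσdef
  have hσp : σ.PosSemidef := by
    rw [hσdef, measChannel]
    refine Finset.sum_induction _ _ (fun a b ha hb => ha.add hb) Matrix.PosSemidef.zero
      (fun i _ => ?_)
    have h := hρp.mul_mul_conjTranspose_same (P i)
    rwa [(hP.1 i)] at h
  set R := msqrt ρ with hR
  set S := msqrt σ with hS
  have hRps : R.PosSemidef := by rw [hR]; exact msqrt_posSemidef hρp
  have hRR : R * R = ρ := by rw [hR]; exact msqrt_mul_self hρp
  have hSps : S.PosSemidef := by rw [hS]; exact msqrt_posSemidef hσp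
  have hSS : S * S = σ := by rw [hS]; exact msqrt_mul_self hσp
  set X := R * S with hX
  have hq : qFid σ ρ = ((matAbs X).trace).re := by
    rw [qFid, matAbs]
    have h : S * ρ * S = Xᴴ * X := by
      rw [hX, Matrix.conjTranspose_mul, hSps.1, hRps.1, Matrix.mul_assoc S R (R * S),
        ← Matrix.mul_assoc R R S, ← Matrix.mul_assoc S (R * R) S, hRR]
    rw [← hS, h]
  obtain ⟨W, hWX, hKidem, hKh⟩ := exists_contraction X
  have hq2 : qFid σ ρ = ((Wᴴ * X).trace).re := by rw [hq, hWX]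
  have hterm : ∀ j, ((Q j * R * W)ᴴ * (Q j * S)) = Wᴴ * (R * (Q j * S)) := by
    intro j
    rw [Matrix.conjTranspose_mul, Matrix.conjTranspose_mul, hRps.1, (hQ.1 j),
      Matrix.mul_assoc Wᴴ (R * Q j) (Q j * S), Matrix.mul_assoc R (Q j) (Q j * S),
      ← Matrix.mul_assoc (Q j) (Q j) S, hQ.2.1 j]
  have hsplit : (Wᴴ * X).trace = ∑ j, ((Q j * R * W)ᴴ * (Q j * S)).trace := by
    calc (Wᴴ * X).trace = (Wᴴ * (R * ((∑ j, Q j) * S))).trace := by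
          rw [hQ.2.2.2, Matrix.one_mul, hX]
      _ = ∑ j, ((Q j * R * W)ᴴ * (Q j * S)).trace := by
          rw [Matrix.sum_mul, Matrix.mul_sum, Matrix.mul_sum, Matrix.trace_sum]
          exact Finset.sum_congr rfl fun j _ => by rw [hterm j]
  have hb : ∀ j, (((Q j * S)ᴴ * (Q j * S)).trace).re = probAB P Q ρ j := by
    intro j
    have h : ((Q j * S)ᴴ * (Q j * S)).trace = (Q j * σ).trace := by
      rw [Matrix.conjTranspose_mul, hSps.1, (hQ.1 j), Matrix.mul_assoc S (Q j) (Q j * S),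
        ← Matrix.mul_assoc (Q j) (Q j) S, hQ.2.1 j, Matrix.trace_mul_comm S (Q j * S),
        Matrix.mul_assoc (Q j) S S, hSS]
    rw [h, probAB, ← hσdef]
  have ha : ∀ j, (((Q j * R * W)ᴴ * (Q j * R * W)).trace).re ≤ probB Q ρ j := by
    intro j
    set C := Q j * R with hC
    have h1 : ((C * W)ᴴ * (C * W)).trace = (Cᴴ * C * (W * Wᴴ)).trace := by
      rw [Matrix.conjTranspose_mul, Matrix.mul_assoc Wᴴ Cᴴ (C * W),
        Matrix.trace_mul_comm Wᴴ (Cᴴ * (C * W)), ← Matrix.mul_assoc Cᴴ C W,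
        Matrix.mul_assoc (Cᴴ * C) W Wᴴ]
    have h2 : ((Cᴴ * C).trace).re = probB Q ρ j := by
      have h : (Cᴴ * C).trace = (Q j * ρ).trace := by
        rw [hC, Matrix.conjTranspose_mul, hRps.1, (hQ.1 j), Matrix.mul_assoc R (Q j) (Q j * R),
          ← Matrix.mul_assoc (Q j) (Q j) R, hQ.2.1 j, Matrix.trace_mul_comm R (Q j * R),
          Matrix.mul_assoc (Q j) R R, hRR]
      rw [h, probB]
    calc (((C * W)ᴴ * (C * W)).trace).re = ((Cᴴ * C * (W * Wᴴ)).trace).re := by rw [h1]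
      _ ≤ ((Cᴴ * C).trace).re := re_trace_CK_le C (W * Wᴴ) hKidem hKh
      _ = probB Q ρ j := h2
  have hbound : ∀ j, (((Q j * R * W)ᴴ * (Q j * S)).trace).re ≤
      Real.sqrt (probAB P Q ρ j * probB Q ρ j) := by
    intro j
    refine (re_trace_cs _ _).trans ?_
    rw [hb j]
    have hq0 : 0 ≤ probAB P Q ρ j := by rw [← hb j]; exact re_trace_cmul_self_nonneg _
    calc Real.sqrt ((((Q j * R * W)ᴴ * (Q j * R * W)).trace).re * probAB P Q ρ j)
        ≤ Real.sqrt (probB Q ρ j * probAB P Q ρ j) :=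
          Real.sqrt_le_sqrt (mul_le_mul_of_nonneg_right (ha j) hq0)
      _ = Real.sqrt (probAB P Q ρ j * probB Q ρ j) := by rw [mul_comm]
  calc qFid σ ρ = ∑ j, (((Q j * R * W)ᴴ * (Q j * S)).trace).re := by
        rw [hq2, hsplit, Complex.re_sum]
    _ ≤ ∑ j, Real.sqrt (probAB P Q ρ j * probB Q ρ j) := Finset.sum_le_sum fun j _ => hbound j
    _ = classFid (probAB P Q ρ) (probB Q ρ) := rfl

end Stmt6Aux

theorem stmt_6 {d rA rB : ℕ} (hd : 0 < d)
    (P : Fin rA → Matrix (Fin d) (Fin d) ℂ) (Q : Fin rB → Matrix (Fin d) (Fin d) ℂ)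
    (hP : IsProjObs P) (hQ : IsProjObs Q) :
    (∀ ρ : Matrix (Fin d) (Fin d) ℂ, IsDensity ρ →
        classFid (probAB P Q ρ) (probB Q ρ) ≥ qFid (measChannel P ρ) ρ) ∧
      QF P Q ≤
        1 - (sInf {x : ℝ | ∃ ρ, IsDensity ρ ∧ x = qFid (measChannel P ρ) ρ}) ^ 2 := by
  classical
  have key := fun ρ hρ => Stmt6Aux.key_ineq P Q hP hQ ρ hρ
  refine ⟨fun ρ hρ => key ρ hρ, ?_⟩
  set Sset := {x : ℝ | ∃ ρ, IsDensity ρ ∧ x = qFid (measChannel P ρ) ρ} with hSset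
  have hρ₀ : IsDensity (Matrix.diagonal (fun i : Fin d => if i = ⟨0, hd⟩ then (1 : ℂ) else 0)) := by
    constructor
    · refine Matrix.posSemidef_diagonal_iff.mpr fun i => ?_
      split_ifs <;> simp
    · rw [Matrix.trace_diagonal]
      simp
  have hbdd : BddBelow Sset := by
    refine ⟨0, fun x hx => ?_⟩
    obtain ⟨ρ, hρ, rfl⟩ := hx
    exact Stmt6Aux.qFid_nonneg' _ _
  have hc0 : 0 ≤ sInf Sset := by
    refine Real.sInf_nonneg fun x hx => ?_
    obtain ⟨ρ, hρ, rfl⟩ := hx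
    exact Stmt6Aux.qFid_nonneg' _ _
  rw [QF]
  refine csSup_le ⟨_, ⟨_, hρ₀, rfl⟩⟩ ?_
  rintro x ⟨ρ, hρ, rfl⟩
  have h1 : sInf Sset ≤ qFid (measChannel P ρ) ρ := csInf_le hbdd ⟨ρ, hρ, rfl⟩
  have h2 : sInf Sset ≤ classFid (probAB P Q ρ) (probB Q ρ) := h1.trans (key ρ hρ)
  have h3 : (sInf Sset) ^ 2 ≤ (classFid (probAB P Q ρ) (probB Q ρ)) ^ 2 :=
    pow_le_pow_left₀ hc0 h2 2
  linarith

end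
end

section
/- Let C = {P^C_i}_{i=1}^{r} be a projective observable on ℂ^d consisting of r nonzero mutually orthogonal projections summing to the identity. Then the fidelity-based maximal disturbance of C equals 1 − 1/r; that is, sup over density matrices ρ of [1 − F(E^C(ρ), ρ)²] = 1 − 1/r, the supremum being attained at a pure state ψ with ⟨ψ, P^C_i ψ⟩ = 1/r for every i. -/
open scoped BigOperators ComplexOrder
open Matrix

noncomputable section

/-- The PSD square root, written through the spectral decomposition. -/
noncomputable def Matrix.PosSemidef.sqrt {d : ℕ} {A : Matrix (Fin d) (Fin d) ℂ}
    (h : A.PosSemidef) : Matrix (Fin d) (Fin d) ℂ :=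
  (h.1.eigenvectorUnitary : Matrix (Fin d) (Fin d) ℂ) *
    diagonal ((↑) ∘ Real.sqrt ∘ h.1.eigenvalues) *
    (star (h.1.eigenvectorUnitary : Matrix (Fin d) (Fin d) ℂ))

section SqrtAPI
open scoped MatrixOrder

lemma Matrix.PosSemidef.sqrt_eq_cfc {d : ℕ} {A : Matrix (Fin d) (Fin d) ℂ}
    (h : A.PosSemidef) : h.sqrt = CFC.sqrt A := by
  have h0 : 0 ≤ A := Matrix.nonneg_iff_posSemidef.mpr h
  rw [CFC.sqrt_eq_cfc, cfc_nnreal_eq_real _ A h0, h.1.cfc_eq]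
  simp only [IsHermitian.cfc, Unitary.conjStarAlgAut_apply, Matrix.PosSemidef.sqrt]
  congr 3
  funext i
  simp only [Function.comp_apply, Real.coe_sqrt, Real.coe_toNNReal _ (h.eigenvalues_nonneg i)]
  rfl

lemma Matrix.PosSemidef.posSemidef_sqrt {d : ℕ} {A : Matrix (Fin d) (Fin d) ℂ}
    (h : A.PosSemidef) : h.sqrt.PosSemidef := by
  rw [h.sqrt_eq_cfc]
  exact Matrix.nonneg_iff_posSemidef.mp (CFC.sqrt_nonneg A)

lemma Matrix.PosSemidef.sqrt_mul_self {d : ℕ} {A : Matrix (Fin d) (Fin d) ℂ}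
    (h : A.PosSemidef) : h.sqrt * h.sqrt = A := by
  rw [h.sqrt_eq_cfc]
  exact CFC.sqrt_mul_sqrt_self A (Matrix.nonneg_iff_posSemidef.mpr h)

lemma Matrix.PosSemidef.sq_sqrt {d : ℕ} {A : Matrix (Fin d) (Fin d) ℂ}
    (h : A.PosSemidef) : h.sqrt ^ 2 = A := by
  rw [pow_two, h.sqrt_mul_self]

lemma Matrix.PosSemidef.eq_sqrt_of_sq_eq {d : ℕ} {A B : Matrix (Fin d) (Fin d) ℂ}
    (hB : B.PosSemidef) (hA : A.PosSemidef) (hBA : B ^ 2 = A) : B = hA.sqrt := by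
  rw [hA.sqrt_eq_cfc, eq_comm, CFC.sqrt_eq_iff A B (Matrix.nonneg_iff_posSemidef.mpr hA)
    (Matrix.nonneg_iff_posSemidef.mpr hB), ← pow_two, hBA]

end SqrtAPI

namespace Aux

variable {d : ℕ}

lemma psd_smul {A : Matrix (Fin d) (Fin d) ℂ} (hA : A.PosSemidef) {c : ℝ} (hc : 0 ≤ c) :
    ((c : ℂ) • A).PosSemidef := by
  refine Matrix.PosSemidef.of_dotProduct_mulVec_nonneg ?_ fun x => ?_
  · unfold Matrix.IsHermitian
    rw [conjTranspose_smul, hA.1]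
    simp
  · rw [smul_mulVec, dotProduct_smul, smul_eq_mul]
    exact mul_nonneg (by exact_mod_cast Complex.zero_le_real.2 hc) (hA.dotProduct_mulVec_nonneg x)

lemma psd_diag_nonneg {A : Matrix (Fin d) (Fin d) ℂ} (hA : A.PosSemidef) (i : Fin d) :
    0 ≤ A i i := by
  have := hA.dotProduct_mulVec_nonneg (Pi.single i 1)
  simpa [dotProduct, Pi.single_apply, mulVec, Finset.sum_ite_eq] using this

lemma psd_trace_re_nonneg {A : Matrix (Fin d) (Fin d) ℂ} (hA : A.PosSemidef) :
    0 ≤ A.trace.re := by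
  rw [Matrix.trace, Complex.re_sum]
  exact Finset.sum_nonneg fun i _ => (Complex.le_def.1 (psd_diag_nonneg hA i)).1

lemma psd_trace_mul_re_nonneg {A B : Matrix (Fin d) (Fin d) ℂ}
    (hA : A.PosSemidef) (hB : B.PosSemidef) : 0 ≤ (A * B).trace.re := by
  have h1 : A * B = hA.sqrt * (hA.sqrt * B) := by
    rw [← mul_assoc, hA.sqrt_mul_self]
  have h2 : (A * B).trace = (hA.sqrt * B * hA.sqrt).trace := by
    rw [h1, trace_mul_comm, mul_assoc]
  have h3 : (hA.sqrt * B * hA.sqrt).PosSemidef := by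
    have := hB.mul_mul_conjTranspose_same hA.sqrt
    rwa [hA.posSemidef_sqrt.1.eq] at this
  rw [h2]; exact psd_trace_re_nonneg h3




lemma cs_re (v w : Fin d → ℂ) :
    (star v ⬝ᵥ w).re ≤ Real.sqrt ((star v ⬝ᵥ v).re) * Real.sqrt ((star w ⬝ᵥ w).re) := by
  let x : EuclideanSpace ℂ (Fin d) := (WithLp.equiv 2 _).symm v
  let y : EuclideanSpace ℂ (Fin d) := (WithLp.equiv 2 _).symm w
  have hin : inner ℂ x y = star v ⬝ᵥ w := by
    rw [dotProduct_comm]; exact EuclideanSpace.inner_toLp_toLp v w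
  have hxx : inner ℂ x x = star v ⬝ᵥ v := by
    rw [dotProduct_comm]; exact EuclideanSpace.inner_toLp_toLp v v
  have hyy : inner ℂ y y = star w ⬝ᵥ w := by
    rw [dotProduct_comm]; exact EuclideanSpace.inner_toLp_toLp w w
  have h1 : (star v ⬝ᵥ w).re ≤ ‖(star v ⬝ᵥ w : ℂ)‖ := Complex.re_le_norm _
  have h2 : ‖(inner ℂ x y : ℂ)‖ ≤ ‖x‖ * ‖y‖ := norm_inner_le_norm x y
  have hx : ‖x‖ = Real.sqrt ((star v ⬝ᵥ v).re) := by
    rw [@norm_eq_sqrt_re_inner ℂ, hxx]; rfl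
  have hy : ‖y‖ = Real.sqrt ((star w ⬝ᵥ w).re) := by
    rw [@norm_eq_sqrt_re_inner ℂ, hyy]; rfl
  calc (star v ⬝ᵥ w).re ≤ ‖(star v ⬝ᵥ w : ℂ)‖ := h1
    _ = ‖(inner ℂ x y : ℂ)‖ := by rw [hin]
    _ ≤ ‖x‖ * ‖y‖ := h2
    _ = _ := by rw [hx, hy]

lemma conj_unitary_trace (X U : Matrix (Fin d) (Fin d) ℂ) (hU : U * star U = 1) :
    (star U * X * U).trace = X.trace := by
  rw [trace_mul_cycle, hU, one_mul]

lemma conj_diag (X U : Matrix (Fin d) (Fin d) ℂ) (j : Fin d) :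
    (star U * X * U) j j = star (fun a => U a j) ⬝ᵥ (X *ᵥ (fun a => U a j)) := by
  simp only [Matrix.mul_apply, dotProduct, mulVec, Matrix.star_apply, Pi.star_apply,
    Finset.sum_mul, Finset.mul_sum, dotProduct]
  rw [Finset.sum_comm]
  refine Finset.sum_congr rfl fun a _ => Finset.sum_congr rfl fun b _ => ?_
  ring

lemma sqrt_trace {B : Matrix (Fin d) (Fin d) ℂ} (hB : B.PosSemidef) :
    hB.sqrt.trace = ∑ j, (Real.sqrt (hB.1.eigenvalues j) : ℂ) := by
  rw [Matrix.PosSemidef.sqrt, trace_mul_cycle]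
  rw [show (star hB.1.eigenvectorUnitary : Matrix (Fin d) (Fin d) ℂ) *
        hB.1.eigenvectorUnitary.1 = 1 from Unitary.coe_star_mul_self _, one_mul,
    trace_diagonal]
  rfl

/-- Key lemma: `Re tr X ≤ tr √(Xᴴ X)`. -/
lemma retrace_le_trace_sqrt {X B : Matrix (Fin d) (Fin d) ℂ}
    (hB : B.PosSemidef) (hXB : Xᴴ * X = B) : X.trace.re ≤ hB.sqrt.trace.re := by
  set U : Matrix (Fin d) (Fin d) ℂ := (hB.1.eigenvectorUnitary : Matrix (Fin d) (Fin d) ℂ) with hUdef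
  have hU : U * star U = 1 := mem_unitaryGroup_iff.mp hB.1.eigenvectorUnitary.2
  have key : ∀ j, ((star U * X * U) j j).re ≤ Real.sqrt (hB.1.eigenvalues j) := by
    intro j
    rw [conj_diag]
    have hvb : (fun a => U a j) = ⇑(hB.1.eigenvectorBasis j) := by
      funext a; exact hB.1.eigenvectorUnitary_apply a j
    rw [hvb]
    set v : Fin d → ℂ := ⇑(hB.1.eigenvectorBasis j) with hvdef
    have hvv : star v ⬝ᵥ v = 1 := by
      have : (inner ℂ (hB.1.eigenvectorBasis j) (hB.1.eigenvectorBasis j) : ℂ) = 1 := by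
        rw [inner_self_eq_norm_sq_to_K, hB.1.eigenvectorBasis.orthonormal.1 j]
        simp
      rw [dotProduct_comm]; exact this
    have hXvXv : star (X *ᵥ v) ⬝ᵥ (X *ᵥ v) = (hB.1.eigenvalues j : ℂ) := by
      have h1 : star (X *ᵥ v) ⬝ᵥ (X *ᵥ v) = star v ⬝ᵥ (B *ᵥ v) := by
        rw [← hXB, ← mulVec_mulVec, dotProduct_mulVec (star v) Xᴴ, ← star_mulVec]
      have h2 : B *ᵥ v = (hB.1.eigenvalues j : ℂ) • v := by
        rw [hvdef, hB.1.mulVec_eigenvectorBasis j]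
        ext a
        simp [RCLike.real_smul_eq_coe_smul (K := ℂ)]
      rw [h1, h2, dotProduct_smul, smul_eq_mul, hvv, mul_one]
    calc (star v ⬝ᵥ (X *ᵥ v)).re
        ≤ Real.sqrt ((star v ⬝ᵥ v).re) * Real.sqrt ((star (X *ᵥ v) ⬝ᵥ (X *ᵥ v)).re) :=
          cs_re v (X *ᵥ v)
      _ = Real.sqrt (hB.1.eigenvalues j) := by
          rw [hvv, hXvXv]; simp
  have htr : X.trace.re = ∑ j, ((star U * X * U) j j).re := by
    rw [← conj_unitary_trace X U hU, Matrix.trace, Complex.re_sum]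
    rfl
  rw [htr, sqrt_trace hB, Complex.re_sum]
  refine Finset.sum_le_sum fun j _ => ?_
  simpa using key j





/-- Operator monotonicity of the matrix square root. -/
lemma sqrt_monotone {A B : Matrix (Fin d) (Fin d) ℂ} (hA : A.PosSemidef) (hB : B.PosSemidef)
    (hAB : (B - A).PosSemidef) : (hB.sqrt - hA.sqrt).PosSemidef := by
  have hS := hA.posSemidef_sqrt
  have hT := hB.posSemidef_sqrt
  set S := hA.sqrt with hSdef
  set T := hB.sqrt with hTdef
  have hH : (T - S).IsHermitian := hT.1.sub hS.1
  apply hH.posSemidef_iff_eigenvalues_nonneg.mpr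
  intro j
  obtain ⟨v, hvv, hv⟩ : ∃ v : Fin d → ℂ,
      star v ⬝ᵥ v = 1 ∧ (T - S) *ᵥ v = (hH.eigenvalues j : ℂ) • v := by
    refine ⟨⇑(hH.eigenvectorBasis j), ?_, ?_⟩
    · have : (inner ℂ (hH.eigenvectorBasis j) (hH.eigenvectorBasis j) : ℂ) = 1 := by
        rw [inner_self_eq_norm_sq_to_K, hH.eigenvectorBasis.orthonormal.1 j]
        simp
      rw [dotProduct_comm]; exact this
    · rw [hH.mulVec_eigenvectorBasis]
      ext a
      simp [RCLike.real_smul_eq_coe_smul (K := ℂ)]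
  generalize hlam : hH.eigenvalues j = lam at hv ⊢
  set a : ℂ := star v ⬝ᵥ (S *ᵥ v) with hadef
  set b : ℂ := star v ⬝ᵥ (T *ᵥ v) with hbdef
  have ha : 0 ≤ a := hS.dotProduct_mulVec_nonneg v
  have hb : 0 ≤ b := hT.dotProduct_mulVec_nonneg v
  have hBA : B - A = T * (T - S) + (T - S) * S := by
    rw [mul_sub, sub_mul, hB.sqrt_mul_self, hA.sqrt_mul_self]
    abel
  have hid : star v ⬝ᵥ ((B - A) *ᵥ v) = (lam : ℂ) * (b + a) := by
    rw [hBA, add_mulVec, dotProduct_add]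
    have e1 : star v ⬝ᵥ ((T * (T - S)) *ᵥ v) = (lam : ℂ) * b := by
      rw [← mulVec_mulVec, hv, mulVec_smul, dotProduct_smul, smul_eq_mul]
    have e2 : star v ⬝ᵥ (((T - S) * S) *ᵥ v) = (lam : ℂ) * a := by
      rw [← mulVec_mulVec, dotProduct_mulVec (star v) (T - S)]
      nth_rewrite 1 [← hH.eq]
      rw [← star_mulVec, hv, star_smul, smul_dotProduct]
      simp [smul_eq_mul, hadef]
    rw [e1, e2, mul_add]
  by_cases hab : b + a = 0
  · have hab' : a = -b := by linear_combination hab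
    have ha0 : a = 0 := le_antisymm (by rw [hab']; exact neg_nonpos.mpr hb) ha
    have hb0 : b = 0 := by
      have : b + a = b := by rw [ha0, add_zero]
      rw [← this, hab]
    have hSv : S *ᵥ v = 0 := (hS.dotProduct_mulVec_zero_iff v).mp ha0
    have hTv : T *ᵥ v = 0 := (hT.dotProduct_mulVec_zero_iff v).mp hb0
    have hzero : (lam : ℂ) • v = 0 := by
      rw [← hv, sub_mulVec, hSv, hTv, sub_zero]
    have : (lam : ℂ) = 0 := by
      have h2 := congrArg (fun w => star v ⬝ᵥ w) hzero
      simpa [dotProduct_smul, hvv, smul_eq_mul] using h2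
    simp [Complex.ofReal_eq_zero.mp this]
  · have hpos : 0 < (b + a).re := by
      have h0 : 0 ≤ b + a := add_nonneg hb ha
      rcases lt_or_eq_of_le h0 with h | h
      · exact (Complex.lt_def.mp h).1
      · exact absurd h.symm hab
    have him : (b + a).im = 0 := (Complex.le_def.mp (add_nonneg hb ha)).2.symm
    have hre : 0 ≤ lam * (b + a).re := by
      have h0 : 0 ≤ star v ⬝ᵥ ((B - A) *ᵥ v) := hAB.dotProduct_mulVec_nonneg v
      have h1 := (Complex.le_def.mp h0).1
      rw [hid] at h1
      simpa [Complex.mul_re, him] using h1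
    exact nonneg_of_mul_nonneg_right (by rwa [mul_comm] at hre) hpos
lemma sum_mulVec {ι : Type*} (s : Finset ι) (f : ι → Matrix (Fin d) (Fin d) ℂ) (x : Fin d → ℂ) :
    (∑ i ∈ s, f i) *ᵥ x = ∑ i ∈ s, f i *ᵥ x := by
  ext k
  simp only [mulVec, dotProduct, Finset.sum_apply, Matrix.sum_apply, Finset.sum_mul]
  rw [Finset.sum_comm]

lemma mulVec_sum {ι : Type*} (s : Finset ι) (M : Matrix (Fin d) (Fin d) ℂ) (v : ι → Fin d → ℂ) :
    M *ᵥ (∑ i ∈ s, v i) = ∑ i ∈ s, M *ᵥ v i := by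
  ext k
  simp only [mulVec, dotProduct, Finset.sum_apply, Finset.mul_sum]
  rw [Finset.sum_comm]

lemma dotProduct_sum' {ι : Type*} (s : Finset ι) (v : Fin d → ℂ) (w : ι → Fin d → ℂ) :
    v ⬝ᵥ (∑ i ∈ s, w i) = ∑ i ∈ s, v ⬝ᵥ w i := by
  simp only [dotProduct, Finset.sum_apply, Finset.mul_sum]
  rw [Finset.sum_comm]

lemma sum_dotProduct' {ι : Type*} (s : Finset ι) (v : ι → Fin d → ℂ) (w : Fin d → ℂ) :
    (∑ i ∈ s, v i) ⬝ᵥ w = ∑ i ∈ s, v i ⬝ᵥ w := by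
  simp only [dotProduct, Finset.sum_apply, Finset.sum_mul]
  rw [Finset.sum_comm]

lemma herm_sq_quad {S : Matrix (Fin d) (Fin d) ℂ} (hS : S.IsHermitian) (y : Fin d → ℂ) :
    star y ⬝ᵥ ((S * S) *ᵥ y) = star (S *ᵥ y) ⬝ᵥ (S *ᵥ y) := by
  rw [← mulVec_mulVec, dotProduct_mulVec (star y) S]
  nth_rewrite 1 [← hS.eq]
  rw [← star_mulVec]

lemma psd_sum {r : ℕ} (f : Fin r → Matrix (Fin d) (Fin d) ℂ)
    (h : ∀ i, (f i).PosSemidef) : (∑ i, f i).PosSemidef := by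
  refine Matrix.PosSemidef.of_dotProduct_mulVec_nonneg ?_ fun x => ?_
  · unfold Matrix.IsHermitian
    rw [conjTranspose_sum]
    exact Finset.sum_congr rfl fun i _ => (h i).1
  · rw [sum_mulVec, dotProduct_sum']
    exact Finset.sum_nonneg fun i _ => (h i).dotProduct_mulVec_nonneg x

lemma herm_conj_quad {Q ρ : Matrix (Fin d) (Fin d) ℂ} (hQ : Q.IsHermitian) (x : Fin d → ℂ) :
    star x ⬝ᵥ ((Q * ρ * Q) *ᵥ x) = star (Q *ᵥ x) ⬝ᵥ (ρ *ᵥ (Q *ᵥ x)) := by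
  rw [star_mulVec, ← mulVec_mulVec, ← mulVec_mulVec, dotProduct_mulVec (star x) Q, hQ.eq]

lemma dot_self_ofReal (w : Fin d → ℂ) :
    star w ⬝ᵥ w = ((∑ k, Complex.normSq (w k) : ℝ) : ℂ) := by
  rw [dotProduct, Complex.ofReal_sum]
  refine Finset.sum_congr rfl fun k _ => ?_
  simp [Complex.normSq_eq_conj_mul_self]

lemma normSq_sum_le {r : ℕ} (f : Fin r → ℂ) :
    Complex.normSq (∑ i, f i) ≤ (r : ℝ) * ∑ i, Complex.normSq (f i) := by
  have h1 : ‖∑ i, f i‖ ≤ ∑ i, ‖f i‖ := by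
    simpa using norm_sum_le Finset.univ f
  have h2 : (∑ i, ‖f i‖) ^ 2 ≤ (r : ℝ) * ∑ i, (‖f i‖) ^ 2 := by
    simpa using sq_sum_le_card_mul_sum_sq (s := Finset.univ)
      (f := fun i => ‖f i‖)
  calc Complex.normSq (∑ i, f i) = (‖∑ i, f i‖) ^ 2 := (Complex.sq_norm _).symm
    _ ≤ (∑ i, ‖f i‖) ^ 2 := by
        have := norm_nonneg (∑ i, f i)
        exact pow_le_pow_left₀ this h1 2
    _ ≤ (r : ℝ) * ∑ i, (‖f i‖) ^ 2 := h2
    _ = (r : ℝ) * ∑ i, Complex.normSq (f i) := by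
        congr 1
        exact Finset.sum_congr rfl fun i _ => Complex.sq_norm _

lemma measChannel_posSemidef {r : ℕ} {P : Fin r → Matrix (Fin d) (Fin d) ℂ}
    (hP : IsProjObs P) {ρ : Matrix (Fin d) (Fin d) ℂ} (hρ : ρ.PosSemidef) :
    (measChannel P ρ).PosSemidef := by
  refine psd_sum _ fun i => ?_
  have := hρ.mul_mul_conjTranspose_same (P i)
  rwa [(hP.1 i).eq] at this

/-- The pinching inequality `ρ ≤ r • E(ρ)`. -/
lemma pinching {r : ℕ} {P : Fin r → Matrix (Fin d) (Fin d) ℂ} (hP : IsProjObs P)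
    {ρ : Matrix (Fin d) (Fin d) ℂ} (hρ : ρ.PosSemidef) :
    ((r : ℂ) • measChannel P ρ - ρ).PosSemidef := by
  have hE := measChannel_posSemidef hP hρ
  refine Matrix.PosSemidef.of_dotProduct_mulVec_nonneg ?_ fun x => ?_
  · unfold Matrix.IsHermitian
    rw [conjTranspose_sub, conjTranspose_smul, hE.1, hρ.1]
    simp
  · set S := hρ.sqrt with hSdef
    have hS := hρ.posSemidef_sqrt
    set z : Fin r → (Fin d → ℂ) := fun i => S *ᵥ (P i *ᵥ x) with hzdef
    have hterm : ∀ i, star x ⬝ᵥ ((P i * ρ * P i) *ᵥ x) = star (z i) ⬝ᵥ (z i) := by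
      intro i
      rw [herm_conj_quad (hP.1 i) x,
        show ρ = S * S from (hρ.sqrt_mul_self).symm, herm_sq_quad hS.1]
    have hEx : star x ⬝ᵥ ((measChannel P ρ) *ᵥ x)
        = ((∑ i, ∑ k, Complex.normSq (z i k) : ℝ) : ℂ) := by
      rw [measChannel, sum_mulVec, dotProduct_sum', Complex.ofReal_sum]
      exact Finset.sum_congr rfl fun i _ => by rw [hterm i, dot_self_ofReal]
    have hx : x = ∑ i, P i *ᵥ x := by
      rw [← sum_mulVec, hP.2.2.2, one_mulVec]
    have hρx : star x ⬝ᵥ (ρ *ᵥ x) = ((∑ k, Complex.normSq ((∑ i, z i) k) : ℝ) : ℂ) := by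
      rw [show ρ = S * S from (hρ.sqrt_mul_self).symm, herm_sq_quad hS.1, dot_self_ofReal]
      congr 2
      funext k
      rw [show S *ᵥ x = ∑ i, z i by conv_lhs => rw [hx, mulVec_sum]]
    rw [sub_mulVec, dotProduct_sub, smul_mulVec, dotProduct_smul, hEx, hρx]
    rw [smul_eq_mul, ← Complex.ofReal_natCast, ← Complex.ofReal_mul, ← Complex.ofReal_sub]
    rw [Complex.zero_le_real]
    have hpt : ∀ k, Complex.normSq ((∑ i, z i) k) ≤ (r:ℝ) * ∑ i, Complex.normSq (z i k) := by
      intro k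
      have := normSq_sum_le (fun i => z i k)
      simpa [Finset.sum_apply] using this
    have : ∑ k, Complex.normSq ((∑ i, z i) k) ≤ (r:ℝ) * ∑ i, ∑ k, Complex.normSq (z i k) := by
      calc ∑ k, Complex.normSq ((∑ i, z i) k)
          ≤ ∑ k, (r:ℝ) * ∑ i, Complex.normSq (z i k) := Finset.sum_le_sum fun k _ => hpt k
        _ = (r:ℝ) * ∑ k, ∑ i, Complex.normSq (z i k) := by rw [Finset.mul_sum]
        _ = (r:ℝ) * ∑ i, ∑ k, Complex.normSq (z i k) := by rw [Finset.sum_comm]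
    linarith




lemma vecMulVec_mulVec (a b x : Fin d → ℂ) : vecMulVec a b *ᵥ x = (b ⬝ᵥ x) • a := by
  ext k
  simp only [mulVec, dotProduct, vecMulVec_apply, Pi.smul_apply, smul_eq_mul, Finset.sum_mul]
  refine Finset.sum_congr rfl fun j _ => by ring

lemma mul_vecMulVec (M : Matrix (Fin d) (Fin d) ℂ) (a b : Fin d → ℂ) :
    M * vecMulVec a b = vecMulVec (M *ᵥ a) b := by
  ext i j
  simp only [mul_apply, vecMulVec_apply, mulVec, dotProduct, Finset.sum_mul]
  refine Finset.sum_congr rfl fun k _ => by ring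

lemma vecMulVec_mul (a b : Fin d → ℂ) (M : Matrix (Fin d) (Fin d) ℂ) :
    vecMulVec a b * M = vecMulVec a (b ᵥ* M) := by
  ext i j
  simp only [mul_apply, vecMulVec_apply, vecMul, dotProduct, Finset.mul_sum]
  refine Finset.sum_congr rfl fun k _ => by ring

lemma vecMulVec_smul_left (x : ℂ) (a b : Fin d → ℂ) :
    vecMulVec (x • a) b = x • vecMulVec a b := by
  ext i j
  simp only [vecMulVec_apply, Pi.smul_apply, Matrix.smul_apply, smul_eq_mul]
  ring

lemma vecMulVec_smul_right (x : ℂ) (a b : Fin d → ℂ) :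
    vecMulVec a (x • b) = x • vecMulVec a b := by
  ext i j
  simp only [vecMulVec_apply, Pi.smul_apply, Matrix.smul_apply, smul_eq_mul]
  ring

lemma vecMulVec_star_herm (v : Fin d → ℂ) : (vecMulVec v (star v)).IsHermitian := by
  ext i j
  simp only [conjTranspose_apply, vecMulVec_apply, Pi.star_apply, star_mul', star_star]
  ring

lemma star_dot_conj (v x : Fin d → ℂ) : star x ⬝ᵥ v = starRingEnd ℂ (star v ⬝ᵥ x) := by
  simp only [dotProduct, map_sum, _root_.map_mul, Pi.star_apply]
  refine Finset.sum_congr rfl fun k _ => ?_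
  simp [Complex.conj_conj, mul_comm]

lemma psd_vecMulVec (v : Fin d → ℂ) : (vecMulVec v (star v)).PosSemidef := by
  refine Matrix.PosSemidef.of_dotProduct_mulVec_nonneg (vecMulVec_star_herm v) fun x => ?_
  rw [vecMulVec_mulVec, dotProduct_smul, smul_eq_mul, star_dot_conj v x,
    Complex.mul_conj]
  exact Complex.zero_le_real.mpr (Complex.normSq_nonneg _)

lemma trace_vecMulVec (a b : Fin d → ℂ) : (vecMulVec a b).trace = b ⬝ᵥ a := by
  rw [Matrix.trace, dotProduct]
  exact Finset.sum_congr rfl fun k _ => by simp [Matrix.diag, vecMulVec_apply]; ring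


lemma vecMul_vecMulVec (b c e : Fin d → ℂ) : b ᵥ* vecMulVec c e = (b ⬝ᵥ c) • e := by
  ext j
  simp only [vecMul, dotProduct, vecMulVec_apply, Pi.smul_apply, smul_eq_mul, Finset.sum_mul]
  refine Finset.sum_congr rfl fun k _ => by ring

lemma vecMulVec_mul_vecMulVec (a b c e : Fin d → ℂ) :
    vecMulVec a b * vecMulVec c e = (b ⬝ᵥ c) • vecMulVec a e := by
  rw [vecMulVec_mul, vecMul_vecMulVec, vecMulVec_smul_right]

end Aux

open Aux


lemma qFid_lower {d r : ℕ} (P : Fin r → Matrix (Fin d) (Fin d) ℂ) (hP : IsProjObs P)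
    {ρ : Matrix (Fin d) (Fin d) ℂ} (hρd : IsDensity ρ) (hr : 0 < r) :
    1 / Real.sqrt r ≤ qFid (measChannel P ρ) ρ := by
  obtain ⟨hρ, htr⟩ := hρd
  set E := measChannel P ρ with hEdef
  have hE : E.PosSemidef := measChannel_posSemidef hP hρ
  have hS := hρ.posSemidef_sqrt
  have hT := hE.posSemidef_sqrt
  have hM : (hE.sqrt * ρ * hE.sqrt).PosSemidef := by
    have := hρ.mul_mul_conjTranspose_same hE.sqrt
    rwa [hT.1.eq] at this
  have hq : qFid E ρ = hM.sqrt.trace.re := by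
    rw [qFid, show msqrt E = hE.sqrt from dif_pos hE,
      show msqrt (hE.sqrt * ρ * hE.sqrt) = hM.sqrt from dif_pos hM]
  have hXB : (hρ.sqrt * hE.sqrt)ᴴ * (hρ.sqrt * hE.sqrt) = hE.sqrt * ρ * hE.sqrt := by
    rw [conjTranspose_mul, hS.1.eq, hT.1.eq, mul_assoc, ← mul_assoc hρ.sqrt hρ.sqrt,
      hρ.sqrt_mul_self, ← mul_assoc]
  have key : (hρ.sqrt * hE.sqrt).trace.re ≤ qFid E ρ := by
    rw [hq]; exact retrace_le_trace_sqrt hM hXB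
  have hrpos : (0:ℝ) < r := Nat.cast_pos.mpr hr
  have hrE : (((r:ℝ) : ℂ) • E).PosSemidef := psd_smul hE (le_of_lt hrpos)
  have hpin' : ((((r:ℝ)) : ℂ) • E - ρ).PosSemidef := by
    have hpin : ((r : ℂ) • E - ρ).PosSemidef := pinching hP hρ
    have : (((r:ℝ)) : ℂ) = (r : ℂ) := by push_cast; ring
    rw [this]
    exact hpin
  have hmono : (hrE.sqrt - hρ.sqrt).PosSemidef := sqrt_monotone hρ hrE hpin'
  have hsq : hrE.sqrt = ((Real.sqrt r : ℝ) : ℂ) • hE.sqrt := by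
    symm
    apply Matrix.PosSemidef.eq_sqrt_of_sq_eq (psd_smul hT (Real.sqrt_nonneg _))
    rw [smul_pow, hE.sq_sqrt, ← Complex.ofReal_pow, Real.sq_sqrt (le_of_lt hrpos)]
  have tr1 : 0 ≤ ((((Real.sqrt r : ℝ) : ℂ) • hE.sqrt - hρ.sqrt) * hρ.sqrt).trace.re := by
    rw [← hsq]
    exact psd_trace_mul_re_nonneg hmono hS
  have expand : ((((Real.sqrt r : ℝ) : ℂ) • hE.sqrt - hρ.sqrt) * hρ.sqrt).trace
      = ((Real.sqrt r : ℝ) : ℂ) * (hE.sqrt * hρ.sqrt).trace - 1 := by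
    rw [sub_mul, smul_mul_assoc, trace_sub, trace_smul, hρ.sqrt_mul_self, htr, smul_eq_mul]
  have tr2 : 1 ≤ Real.sqrt r * (hE.sqrt * hρ.sqrt).trace.re := by
    have h1 := tr1
    rw [expand] at h1
    simp only [Complex.sub_re, Complex.mul_re, Complex.ofReal_re, Complex.ofReal_im,
      Complex.one_re, zero_mul, sub_zero] at h1
    linarith
  have hsr : 0 < Real.sqrt r := Real.sqrt_pos.mpr hrpos
  have h3 : 1 / Real.sqrt r ≤ (hρ.sqrt * hE.sqrt).trace.re := by
    rw [trace_mul_comm, div_le_iff₀ hsr]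
    linarith
  linarith



lemma attain {d r : ℕ} (P : Fin r → Matrix (Fin d) (Fin d) ℂ) (hP : IsProjObs P)
    (hnz : ∀ i, P i ≠ 0) (hr : 0 < r) :
    ∃ ψ : Fin d → ℂ, (∑ k, Complex.normSq (ψ k)) = 1 ∧
      (∀ i, star ψ ⬝ᵥ (P i *ᵥ ψ) = (1 : ℂ) / (r : ℂ)) ∧
      IsDensity (proj ψ) ∧
      qFid (measChannel P (proj ψ)) (proj ψ) = (Real.sqrt r)⁻¹ := by
  have hrR : (0:ℝ) < r := Nat.cast_pos.mpr hr
  have hu : ∀ i, ∃ u : Fin d → ℂ, P i *ᵥ u = u ∧ star u ⬝ᵥ u = 1 := by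
    intro i
    obtain ⟨a, b, hab⟩ : ∃ a b, P i a b ≠ 0 := by
      by_contra h
      push_neg at h
      exact hnz i (Matrix.ext fun a b => by simpa using h a b)
    set y : Fin d → ℂ := fun k => P i k b with hy
    have hyne : ∃ k, y k ≠ 0 := ⟨a, hab⟩
    have hyP : P i *ᵥ y = y := by
      have h1 : y = P i *ᵥ Pi.single b 1 := by
        ext k
        simp [hy, mulVec_single]
      rw [h1, mulVec_mulVec, hP.2.1 i]
    have hypos : 0 < ∑ k, Complex.normSq (y k) := by
      obtain ⟨k, hk⟩ := hyne
      exact Finset.sum_pos' (fun j _ => Complex.normSq_nonneg _)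
        ⟨k, Finset.mem_univ k, Complex.normSq_pos.mpr hk⟩
    set n : ℝ := Real.sqrt (∑ k, Complex.normSq (y k)) with hn
    have hnpos : 0 < n := Real.sqrt_pos.mpr hypos
    have hsig : star y ⬝ᵥ y = ((n^2 : ℝ) : ℂ) := by
      rw [dot_self_ofReal]
      congr 1
      rw [hn, Real.sq_sqrt (le_of_lt hypos)]
    refine ⟨((n⁻¹ : ℝ) : ℂ) • y, ?_, ?_⟩
    · rw [mulVec_smul, hyP]
    · have hre : ((n⁻¹:ℝ):ℂ) * (((n⁻¹:ℝ):ℂ) * ((n^2 : ℝ):ℂ)) = 1 := by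
        push_cast
        field_simp
      calc star (((n⁻¹ : ℝ) : ℂ) • y) ⬝ᵥ (((n⁻¹ : ℝ) : ℂ) • y)
          = ((n⁻¹:ℝ):ℂ) * (((n⁻¹:ℝ):ℂ) * (star y ⬝ᵥ y)) := by
            rw [star_smul, smul_dotProduct, dotProduct_smul, smul_eq_mul, smul_eq_mul]
            simp [Complex.conj_ofReal]
        _ = 1 := by rw [hsig]; exact hre
  choose u hu1 hu2 using hu
  have horth : ∀ i k, i ≠ k → star (u i) ⬝ᵥ u k = 0 := by
    intro i k hik
    conv_lhs => rw [← hu1 i, ← hu1 k]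
    rw [star_mulVec, (hP.1 i).eq, ← dotProduct_mulVec, mulVec_mulVec, hP.2.2.1 i k hik,
      zero_mulVec, dotProduct_zero]
  set c : ℝ := (Real.sqrt r)⁻¹ with hc
  have hcpos : 0 < c := inv_pos.mpr (Real.sqrt_pos.mpr hrR)
  have hccR : c * c = 1 / (r:ℝ) := by
    rw [hc, ← mul_inv, Real.mul_self_sqrt (le_of_lt hrR), one_div]
  have hcc : ((c:ℂ)) * ((c:ℂ)) = 1 / (r : ℂ) := by
    rw [← Complex.ofReal_mul, hccR]
    push_cast
    ring
  set ψ : Fin d → ℂ := (c : ℂ) • ∑ i, u i with hψ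
  have hPψ : ∀ j, P j *ᵥ ψ = (c:ℂ) • u j := by
    intro j
    rw [hψ, mulVec_smul, mulVec_sum]
    congr 1
    rw [show ∑ i, P j *ᵥ u i = ∑ i, (if i = j then u j else 0) from
      Finset.sum_congr rfl fun i _ => by
        rw [← hu1 i, mulVec_mulVec]
        by_cases hij : i = j
        · subst hij
          rw [hP.2.1 i, hu1 i, if_pos rfl]
        · rw [hP.2.2.1 j i (Ne.symm hij), zero_mulVec, if_neg hij]]
    simp
  have hdotu : ∀ j, star (u j) ⬝ᵥ ψ = (c:ℂ) := by
    intro j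
    rw [hψ, dotProduct_smul, dotProduct_sum']
    rw [show (∑ i, star (u j) ⬝ᵥ u i) = 1 from by
      rw [Finset.sum_eq_single j (fun i _ hij => horth j i (Ne.symm hij)) (by simp)]
      exact hu2 j]
    simp
  have hstarψ : star ψ = (c:ℂ) • ∑ i, star (u i) := by
    rw [hψ, star_smul, star_sum]
    congr 1
    exact Complex.conj_ofReal c
  have hψdotu : ∀ j, star ψ ⬝ᵥ u j = (c:ℂ) := by
    intro j
    rw [hstarψ, smul_dotProduct, sum_dotProduct', smul_eq_mul]
    rw [show (∑ i, star (u i) ⬝ᵥ u j) = 1 from by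
      rw [Finset.sum_eq_single j (fun i _ hij => horth i j hij) (by simp)]
      exact hu2 j]
    rw [mul_one]
  have hψdot : ∀ j, star ψ ⬝ᵥ (P j *ᵥ ψ) = 1 / (r : ℂ) := fun j => by
    rw [hPψ j, dotProduct_smul, smul_eq_mul, hψdotu j, hcc]
  have hψψ : star ψ ⬝ᵥ ψ = 1 := by
    calc star ψ ⬝ᵥ ψ = star ψ ⬝ᵥ ((∑ j, P j) *ᵥ ψ) := by rw [hP.2.2.2, one_mulVec]
      _ = ∑ j, star ψ ⬝ᵥ (P j *ᵥ ψ) := by rw [sum_mulVec, dotProduct_sum']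
      _ = ∑ _j : Fin r, 1/(r:ℂ) := Finset.sum_congr rfl fun j _ => hψdot j
      _ = 1 := by
          rw [Finset.sum_const, Finset.card_univ, Fintype.card_fin, nsmul_eq_mul]
          have : (r : ℂ) ≠ 0 := Nat.cast_ne_zero.mpr (Nat.pos_iff_ne_zero.mp hr)
          field_simp
  have hnorm : (∑ k, Complex.normSq (ψ k)) = 1 := by
    have h1 := dot_self_ofReal ψ
    rw [hψψ] at h1
    exact_mod_cast h1.symm
  have hdens : IsDensity (proj ψ) := by
    refine ⟨psd_vecMulVec ψ, ?_⟩
    rw [proj, trace_vecMulVec, hψψ]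
  set Q : Matrix (Fin d) (Fin d) ℂ := ∑ i, vecMulVec (u i) (star (u i)) with hQ
  have hQpsd : Q.PosSemidef := psd_sum _ fun i => psd_vecMulVec (u i)
  have hQsq : Q * Q = Q := by
    rw [hQ, Finset.sum_mul]
    refine Finset.sum_congr rfl fun i _ => ?_
    rw [Finset.mul_sum, Finset.sum_eq_single i
      (fun k _ hki => by rw [vecMulVec_mul_vecMulVec, horth i k (Ne.symm hki), zero_smul])
      (by simp)]
    rw [vecMulVec_mul_vecMulVec, hu2 i, one_smul]
  have hQψ : Q *ᵥ ψ = ψ := by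
    rw [hQ, sum_mulVec]
    calc ∑ i, vecMulVec (u i) (star (u i)) *ᵥ ψ
        = ∑ i, (c:ℂ) • u i := Finset.sum_congr rfl fun i _ => by
          rw [vecMulVec_mulVec, hdotu i]
      _ = ψ := by rw [← Finset.smul_sum, ← hψ]
  have hcsq : ((c:ℂ)) * ((c:ℂ)) = ((c^2 : ℝ) : ℂ) := by push_cast; ring
  have hEeq : measChannel P (proj ψ) = ((c^2 : ℝ) : ℂ) • Q := by
    rw [measChannel, hQ, Finset.smul_sum]
    refine Finset.sum_congr rfl fun i _ => ?_
    rw [proj, mul_vecMulVec, vecMulVec_mul,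
      show star ψ ᵥ* P i = star (P i *ᵥ ψ) from by rw [star_mulVec, (hP.1 i).eq],
      hPψ i, star_smul, vecMulVec_smul_left, vecMulVec_smul_right, smul_smul]
    congr 1
    rw [show star ((c:ℂ)) = ((c:ℂ)) from Complex.conj_ofReal c, hcsq]
  have hEpsd : (measChannel P (proj ψ)).PosSemidef := by
    rw [hEeq]
    exact psd_smul hQpsd (sq_nonneg c)
  have hcQpsd : (((c:ℝ):ℂ) • Q).PosSemidef := psd_smul hQpsd hcpos.le
  have hsqrtE : msqrt (measChannel P (proj ψ)) = (c:ℂ) • Q := by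
    rw [msqrt, dif_pos hEpsd]
    refine (Matrix.PosSemidef.eq_sqrt_of_sq_eq hcQpsd hEpsd ?_).symm
    rw [pow_two, smul_mul_assoc, mul_smul_comm, smul_smul, hQsq, hcsq, hEeq]
  have hMeq : msqrt (measChannel P (proj ψ)) * proj ψ * msqrt (measChannel P (proj ψ))
      = ((c^2:ℝ):ℂ) • proj ψ := by
    rw [hsqrtE, smul_mul_assoc, smul_mul_assoc, mul_smul_comm, smul_smul, hcsq]
    congr 1
    rw [proj, mul_vecMulVec, vecMulVec_mul, hQψ,
      show star ψ ᵥ* Q = star (Q *ᵥ ψ) from by rw [star_mulVec, hQpsd.1.eq],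
      hQψ]
  have hprojpsd := psd_vecMulVec ψ
  have hMpsd : (((c^2:ℝ):ℂ) • proj ψ).PosSemidef := by
    have := psd_smul (A := proj ψ) hprojpsd (sq_nonneg c)
    exact this
  have hprojsq : proj ψ * proj ψ = proj ψ := by
    rw [proj, vecMulVec_mul_vecMulVec, hψψ, one_smul]
  have hsqrtM : msqrt (((c^2:ℝ):ℂ) • proj ψ) = (c:ℂ) • proj ψ := by
    rw [msqrt, dif_pos hMpsd]
    refine (Matrix.PosSemidef.eq_sqrt_of_sq_eq
      (psd_smul (A := proj ψ) hprojpsd hcpos.le) hMpsd ?_).symm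
    rw [pow_two, smul_mul_assoc, mul_smul_comm, smul_smul, hprojsq, hcsq]
  refine ⟨ψ, hnorm, hψdot, hdens, ?_⟩
  rw [qFid, hMeq, hsqrtM, trace_smul, smul_eq_mul, hdens.2, mul_one, Complex.ofReal_re]

theorem stmt_7 {d r : ℕ} (hd : 0 < d)
    (P : Fin r → Matrix (Fin d) (Fin d) ℂ) (hP : IsProjObs P) (hnz : ∀ i, P i ≠ 0) :
    sSup {x : ℝ | ∃ ρ, IsDensity ρ ∧ x = 1 - (qFid (measChannel P ρ) ρ) ^ 2}
        = 1 - 1 / (r : ℝ) ∧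
      ∃ ψ : Fin d → ℂ, (∑ k, Complex.normSq (ψ k)) = 1 ∧
        (∀ i, star ψ ⬝ᵥ (P i *ᵥ ψ) = (1 : ℂ) / (r : ℂ)) ∧
        1 - (qFid (measChannel P (proj ψ)) (proj ψ)) ^ 2 = 1 - 1 / (r : ℝ) := by
  classical
  have hr : 0 < r := by
    rcases Nat.eq_zero_or_pos r with h0 | h
    · exfalso
      have h1 := hP.2.2.2
      subst h0
      rw [show (∑ i : Fin 0, P i) = 0 from by simp] at h1
      have h2 := congrFun (congrFun h1 ⟨0, hd⟩) ⟨0, hd⟩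
      simp [Matrix.one_apply] at h2
    · exact h
  have hrR : (0:ℝ) < r := Nat.cast_pos.mpr hr
  obtain ⟨ψ, hψn, hψd, hψdens, hψF⟩ := attain P hP hnz hr
  have hFval : 1 - (qFid (measChannel P (proj ψ)) (proj ψ))^2 = 1 - 1/(r:ℝ) := by
    rw [hψF]
    congr 1
    rw [inv_pow, Real.sq_sqrt hrR.le, one_div]
  have hub : ∀ x ∈ {x : ℝ | ∃ ρ, IsDensity ρ ∧ x = 1 - (qFid (measChannel P ρ) ρ)^2},
      x ≤ 1 - 1/(r:ℝ) := by
    rintro x ⟨ρ, hρ, rfl⟩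
    have h1 := qFid_lower P hP hρ hr
    have h3 : (1/Real.sqrt r)^2 ≤ (qFid (measChannel P ρ) ρ)^2 :=
      pow_le_pow_left₀ (by positivity) h1 2
    have h2 : 1/(r:ℝ) ≤ (qFid (measChannel P ρ) ρ)^2 := by
      calc 1/(r:ℝ) = (1/Real.sqrt r)^2 := by rw [div_pow, one_pow, Real.sq_sqrt hrR.le]
        _ ≤ _ := h3
    linarith
  have hmem : (1 - 1/(r:ℝ)) ∈
      {x : ℝ | ∃ ρ, IsDensity ρ ∧ x = 1 - (qFid (measChannel P ρ) ρ)^2} :=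
    ⟨proj ψ, hψdens, hFval.symm⟩
  constructor
  · exact le_antisymm (csSup_le ⟨_, hmem⟩ hub) (le_csSup ⟨1 - 1/(r:ℝ), hub⟩ hmem)
  · exact ⟨ψ, hψn, hψd, hFval⟩


end
end
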